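/- Define the multiplicative function ψ₀ on triples of prime powers by ψ₀(p^{β₁}, p^{β₂}, p^{β₃}) = max over β ≤ max{β₁, β₂, ⌈β₃/2⌉} of p^{min{β,β₁} + min{β,β₂} + min{2β,β₃} − 2β}. Then ψ₀(D₁, D₂, D₃) ≤ (D₁D₂D₃)^{1/2} for all positive integers D₁, D₂, D₃, and if D₃ is squarefree then ψ₀(D₁,D₂,D₃) = gcd(D₁,D₂,D₃). -/

import Mathlib

/-- Local exponent of `ψ₀` at a prime with valuations `b₁, b₂, b₃`:
`max` over `β ≤ max{b₁, b₂, ⌈b₃/2⌉}` of `min{β,b₁} + min{β,b₂} + min{2β,b₃} − 2β`. -/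
def psiExp (b₁ b₂ b₃ : ℕ) : ℕ :=
  Finset.sup (Finset.range (max (max b₁ b₂) ((b₃ + 1) / 2) + 1))
    (fun β => min β b₁ + min β b₂ + min (2 * β) b₃ - 2 * β)

lemma psiExp_le (b₁ b₂ b₃ : ℕ) : 2 * psiExp b₁ b₂ b₃ ≤ b₁ + b₂ + b₃ := by
  obtain ⟨β, -, hβ⟩ := Finset.exists_mem_eq_sup
    (Finset.range (max (max b₁ b₂) ((b₃ + 1) / 2) + 1))
    ⟨0, Finset.mem_range.2 (by omega)⟩
    (fun β => min β b₁ + min β b₂ + min (2 * β) b₃ - 2 * β)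
  rw [psiExp, hβ]
  omega

lemma psiExp_eq (b₁ b₂ b₃ : ℕ) (h : b₃ ≤ 1) : psiExp b₁ b₂ b₃ = min (min b₁ b₂) b₃ := by
  unfold psiExp
  apply le_antisymm
  · exact Finset.sup_le fun β _ => by omega
  · have hm : min (min b₁ b₂) b₃ ∈ Finset.range (max (max b₁ b₂) ((b₃ + 1) / 2) + 1) :=
      Finset.mem_range.2 (by omega)
    have := Finset.le_sup
      (f := fun β => min β b₁ + min β b₂ + min (2 * β) b₃ - 2 * β) hm
    omega

/-- The multiplicative function `ψ₀`, extended to all triples of positive integers. -/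
def psi0 (D₁ D₂ D₃ : ℕ) : ℕ :=
  ∏ p ∈ (D₁ * D₂ * D₃).primeFactors,
    p ^ psiExp (D₁.factorization p) (D₂.factorization p) (D₃.factorization p)

theorem stmt12 (D₁ D₂ D₃ : ℕ) (h₁ : 0 < D₁) (h₂ : 0 < D₂) (h₃ : 0 < D₃) :
    (psi0 D₁ D₂ D₃ : ℝ) ≤ Real.sqrt ((D₁ * D₂ * D₃ : ℕ) : ℝ) ∧
    (Squarefree D₃ → psi0 D₁ D₂ D₃ = Nat.gcd (Nat.gcd D₁ D₂) D₃) := by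
  have hN : D₁ * D₂ * D₃ ≠ 0 := by positivity
  constructor
  · -- the inequality
    have hsq : psi0 D₁ D₂ D₃ ^ 2 ≤ D₁ * D₂ * D₃ := by
      have hfac : ∀ p, (D₁ * D₂ * D₃).factorization p
          = D₁.factorization p + D₂.factorization p + D₃.factorization p := by
        intro p
        rw [Nat.factorization_mul (by positivity) h₃.ne',
          Nat.factorization_mul h₁.ne' h₂.ne']
        simp
      calc psi0 D₁ D₂ D₃ ^ 2
          = ∏ p ∈ (D₁ * D₂ * D₃).primeFactors,
              p ^ (2 * psiExp (D₁.factorization p) (D₂.factorization p)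
                (D₃.factorization p)) := by
            rw [psi0, ← Finset.prod_pow]
            exact Finset.prod_congr rfl fun p _ => by rw [← pow_mul, mul_comm]
        _ ≤ ∏ p ∈ (D₁ * D₂ * D₃).primeFactors,
              p ^ ((D₁ * D₂ * D₃).factorization p) := by
            refine Finset.prod_le_prod' fun p hp => ?_
            refine Nat.pow_le_pow_right (Nat.prime_of_mem_primeFactors hp).pos ?_
            rw [hfac]
            exact psiExp_le _ _ _
        _ = D₁ * D₂ * D₃ := by
            rw [← Nat.support_factorization]
            exact Nat.factorization_prod_pow_eq_self hN
    rw [Real.le_sqrt (by positivity) (by positivity)]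
    exact_mod_cast hsq
  · -- the squarefree case
    intro hsf
    set G := Nat.gcd (Nat.gcd D₁ D₂) D₃ with hG
    have hGne : G ≠ 0 := Nat.gcd_ne_zero_right h₃.ne'
    have hGfac : ∀ p, G.factorization p
        = min (min (D₁.factorization p) (D₂.factorization p)) (D₃.factorization p) := by
      intro p
      rw [hG, Nat.factorization_gcd (Nat.gcd_ne_zero_left h₁.ne') h₃.ne',
        Nat.factorization_gcd h₁.ne' h₂.ne']
      simp
    have h1 : psi0 D₁ D₂ D₃ = ∏ p ∈ (D₁ * D₂ * D₃).primeFactors, p ^ G.factorization p := by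
      refine Finset.prod_congr rfl fun p _ => ?_
      rw [hGfac, psiExp_eq _ _ _ (hsf.natFactorization_le_one p)]
    rw [h1]
    have hsub : G.primeFactors ⊆ (D₁ * D₂ * D₃).primeFactors := by
      refine Nat.primeFactors_mono ?_ hN
      exact (Nat.gcd_dvd_right _ _).trans (Dvd.intro_left _ rfl)
    rw [← Finset.prod_subset hsub (fun p _ hp => by
      rw [← Nat.support_factorization, Finsupp.notMem_support_iff] at hp
      rw [hp, pow_zero])]
    rw [← Nat.support_factorization]
    exact Nat.factorization_prod_pow_eq_self hGne
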